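/- Suppose a prediction-interval algorithm Ĉ_n satisfies (1−α)-CC with α < 1. Then for every distribution P on ℝ^d × ℝ, at P_X-almost all points x that are not atoms of P_X, the expected Lebesgue measure of Ĉ_n(x) is infinite: E[leb(Ĉ_n(x))] = ∞. -/

import Mathlib

open MeasureTheory
open scoped ENNReal

noncomputable section

/-- A data point: a feature vector in `ℝ^d` together with a real response. -/
abbrev Pt (d : ℕ) : Type := (Fin d → ℝ) × ℝ

/-- A prediction-interval algorithm: maps the training data, auxiliary randomness, and a
feature point to a subset of `ℝ`. -/
abbrev PredAlg (d n : ℕ) (Ω : Type) : Type :=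
  (Fin n → Pt d) → Ω → (Fin d → ℝ) → Set ℝ

/-- Joint law of `n+1` i.i.d. data points from `P` together with independent auxiliary
randomness drawn from `μΩ`. -/
def joint (d n : ℕ) (P : Measure (Pt d)) {Ω : Type} [MeasurableSpace Ω] (μΩ : Measure Ω)
    [SFinite μΩ] : Measure ((Fin (n + 1) → Pt d) × Ω) :=
  (Measure.pi fun _ : Fin (n + 1) => P).prod μΩ

/-- The coverage event `Y_{n+1} ∈ Ĉ_n(X_{n+1})`, where the first `n` data points are the
training data and the last one is the test point. -/
def covEvent {d n : ℕ} {Ω : Type} (C : PredAlg d n Ω) : Set ((Fin (n + 1) → Pt d) × Ω) :=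
  {q | (q.1 (Fin.last n)).2 ∈ C (fun i => q.1 i.castSucc) q.2 (q.1 (Fin.last n)).1}

/-- The event `X_{n+1} ∈ 𝒳`. -/
def testEvent (d n : ℕ) (Ω : Type) (𝒳 : Set (Fin d → ℝ)) : Set ((Fin (n + 1) → Pt d) × Ω) :=
  {q | (q.1 (Fin.last n)).1 ∈ 𝒳}

/-- Distribution-free marginal coverage at level `t` (`(1-β)`-MC means `MC _ _ _ _ (1-β)`):
for every distribution `P`, the probability of coverage is at least `t`. -/
def MC (d n : ℕ) {Ω : Type} [MeasurableSpace Ω] (μΩ : Measure Ω) [SFinite μΩ]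
    (C : PredAlg d n Ω) (t : ℝ) : Prop :=
  ∀ P : Measure (Pt d), IsProbabilityMeasure P →
    ENNReal.ofReal t ≤ joint d n P μΩ (covEvent C)

/-- Distribution-free approximate conditional coverage at level `1 - α` and tolerance `δ`:
for every distribution `P` and every measurable `𝒳` with `P_X(𝒳) ≥ δ`,
`P(Y_{n+1} ∈ Ĉ_n(X_{n+1}) ∧ X_{n+1} ∈ 𝒳) ≥ (1-α) ⬝ P(X_{n+1} ∈ 𝒳)`, i.e. the conditional
coverage probability given `X_{n+1} ∈ 𝒳` is at least `1 - α`. -/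
def ACC (d n : ℕ) {Ω : Type} [MeasurableSpace Ω] (μΩ : Measure Ω) [SFinite μΩ]
    (C : PredAlg d n Ω) (α δ : ℝ) : Prop :=
  ∀ P : Measure (Pt d), IsProbabilityMeasure P →
    ∀ 𝒳 : Set (Fin d → ℝ), MeasurableSet 𝒳 → ENNReal.ofReal δ ≤ P {q | q.1 ∈ 𝒳} →
      ENNReal.ofReal (1 - α) * joint d n P μΩ (testEvent d n Ω 𝒳) ≤
        joint d n P μΩ (covEvent C ∩ testEvent d n Ω 𝒳)


/-- Distribution-free conditional coverage at level `1 - α`: for every distribution `P`,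
the conditional probability of coverage given `X_{n+1} ∈ 𝒳` is at least `1 - α` for every
measurable `𝒳` (this is the standard measure-theoretic rendering of
`P(Y_{n+1} ∈ Ĉ_n(X_{n+1}) | X_{n+1} = x) ≥ 1 - α` for `P_X`-almost every `x`). -/
def CC (d n : ℕ) {Ω : Type} [MeasurableSpace Ω] (μΩ : Measure Ω) [SFinite μΩ]
    (C : PredAlg d n Ω) (α : ℝ) : Prop :=
  ∀ P : Measure (Pt d), IsProbabilityMeasure P →
    ∀ 𝒳 : Set (Fin d → ℝ), MeasurableSet 𝒳 →
      ENNReal.ofReal (1 - α) * joint d n P μΩ (testEvent d n Ω 𝒳) ≤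
        joint d n P μΩ (covEvent C ∩ testEvent d n Ω 𝒳)


lemma aux_pi_restrict {α : Type*} [MeasurableSpace α] (m : ℕ) (κ : Measure α) [IsFiniteMeasure κ]
    {T : Set α} (hT : MeasurableSet T) :
    (Measure.pi fun _ : Fin m => κ).restrict (Set.pi Set.univ fun _ => T)
      = Measure.pi fun _ : Fin m => κ.restrict T := by
  refine (Measure.pi_eq (μ := fun _ : Fin m => κ.restrict T) fun s hs => ?_).symm
  rw [Measure.restrict_apply (MeasurableSet.univ_pi hs)]
  have h : (Set.pi Set.univ s) ∩ (Set.pi Set.univ fun _ => T)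
      = Set.pi Set.univ (fun i => s i ∩ T) := (Set.pi_inter_distrib).symm
  rw [h, Measure.pi_pi]
  exact Finset.prod_congr rfl fun i _ => (Measure.restrict_apply (hs i)).symm

lemma aux_one_le (ε : ℝ≥0∞) (hε : ε ≤ 1) : ∀ m : ℕ, (1:ℝ≥0∞) ≤ (1-ε)^m + m * ε := by
  intro m
  induction m with
  | zero => simp
  | succ m ih =>
    have h1 : (1:ℝ≥0∞) = (1-ε) + ε := (tsub_add_cancel_of_le hε).symm
    calc (1:ℝ≥0∞) = (1-ε) + ε := h1
    _ ≤ ((1-ε)^m + m * ε) * (1-ε) + ε := by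
        gcongr
        exact le_mul_of_one_le_left zero_le ih
    _ = (1-ε)^(m+1) + (m * ε) * (1-ε) + ε := by ring
    _ ≤ (1-ε)^(m+1) + (m * ε) * 1 + ε := by gcongr; exact tsub_le_self
    _ = (1-ε)^(m+1) + (m+1 : ℕ) * ε := by push_cast; ring

lemma aux_bernoulli (ε : ℝ≥0∞) (hε : ε ≤ 1) (m : ℕ) : 1 - (1-ε)^m ≤ m * ε := by
  rw [tsub_le_iff_right]
  calc (1:ℝ≥0∞) ≤ (1-ε)^m + m * ε := aux_one_le ε hε m
  _ = m * ε + (1-ε)^m := add_comm _ _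

set_option maxHeartbeats 1000000 in
lemma aux_key (d n : ℕ) (Ω : Type) [MeasurableSpace Ω] (μΩ : Measure Ω) [IsProbabilityMeasure μΩ]
    (α : ℝ) (C : PredAlg d n Ω)
    (hC : MeasurableSet {p : ((Fin n → Pt d) × Ω × (Fin d → ℝ)) × ℝ |
      p.2 ∈ C p.1.1 p.1.2.1 p.1.2.2})
    (hCC : CC d n μΩ C α)
    (P : Measure (Pt d)) [IsProbabilityMeasure P]
    (𝒳₀ : Set (Fin d → ℝ)) (h𝒳₀ : MeasurableSet 𝒳₀)
    (B : ℝ≥0∞)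
    (hgB : ∀ x ∈ 𝒳₀,
      ∫⁻ q, volume (C q.1 q.2 x) ∂((Measure.pi fun _ : Fin n => P).prod μΩ) ≤ B)
    (M : ℝ) (hM : 0 < M) :
    ENNReal.ofReal (1 - α) * (P.map Prod.fst) 𝒳₀ ≤
      ((ENNReal.ofReal M)⁻¹ * B + n * (P.map Prod.fst) 𝒳₀) * (P.map Prod.fst) 𝒳₀ := by
  have hfst : Measurable (Prod.fst : Pt d → (Fin d → ℝ)) := measurable_fst
  set μX : Measure (Fin d → ℝ) := P.map Prod.fst with hμX
  haveI : IsProbabilityMeasure μX := Measure.isProbabilityMeasure_map hfst.aemeasurable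
  set S : Set (Pt d) := Prod.fst ⁻¹' 𝒳₀ with hSdef
  have hSm : MeasurableSet S := hfst h𝒳₀
  have hMne : ENNReal.ofReal M ≠ 0 := (ENNReal.ofReal_pos.mpr hM).ne'
  set U : Measure ℝ := (ENNReal.ofReal M)⁻¹ • volume.restrict (Set.Ioc 0 M) with hUdef
  have hUuniv : U Set.univ = 1 := by
    rw [hUdef, Measure.smul_apply, smul_eq_mul, Measure.restrict_apply MeasurableSet.univ,
      Set.univ_inter, Real.volume_Ioc]
    rw [show M - 0 = M by ring]
    exact ENNReal.inv_mul_cancel hMne ENNReal.ofReal_ne_top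
  haveI hUprob : IsProbabilityMeasure U := ⟨hUuniv⟩
  set ν : Measure (Pt d) := (μX.restrict 𝒳₀).prod U with hνdef
  set P' : Measure (Pt d) := P.restrict Sᶜ + ν with hP'def
  have hScompl : Sᶜ = Prod.fst ⁻¹' 𝒳₀ᶜ := rfl
  have hνSc : ν Sᶜ = 0 := by
    have h1 : Sᶜ = 𝒳₀ᶜ ×ˢ (Set.univ : Set ℝ) := by
      ext p; simp [hSdef, Set.mem_prod]
    rw [hνdef, h1, Measure.prod_prod, Measure.restrict_apply h𝒳₀.compl,
      Set.compl_inter_self, measure_empty, zero_mul]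
  have hνuniv : ν Set.univ = μX 𝒳₀ := by
    rw [hνdef, ← Set.univ_prod_univ, Measure.prod_prod, Measure.restrict_apply_univ, hUuniv,
      mul_one]
  have hνS : ν S = μX 𝒳₀ := by
    have h1 : ν S = ν Set.univ := by
      refine le_antisymm (measure_mono (Set.subset_univ S)) ?_
      calc ν Set.univ ≤ ν S + ν Sᶜ := by
            rw [← Set.union_compl_self S]; exact measure_union_le _ _
      _ = ν S := by rw [hνSc, add_zero]
    rw [h1, hνuniv]
  have hPS : P S = μX 𝒳₀ := by rw [hμX, Measure.map_apply hfst h𝒳₀]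
  have hP'S : P' S = μX 𝒳₀ := by
    rw [hP'def, Measure.add_apply, Measure.restrict_apply hSm, Set.inter_compl_self,
      measure_empty, zero_add, hνS]
  have hP'Sc : P' Sᶜ = 1 - μX 𝒳₀ := by
    rw [hP'def, Measure.add_apply, Measure.restrict_apply hSm.compl, Set.inter_self, hνSc,
      add_zero, measure_compl hSm (measure_ne_top _ _), measure_univ, hPS]
  have hP'univ : P' Set.univ = 1 := by
    rw [hP'def, Measure.add_apply, Measure.restrict_apply_univ, hνuniv,
      measure_compl hSm (measure_ne_top _ _), measure_univ, hPS]
    exact tsub_add_cancel_of_le prob_le_one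
  haveI hP'prob : IsProbabilityMeasure P' := ⟨hP'univ⟩
  have hP'resS : P'.restrict S = ν := by
    rw [hP'def, Measure.restrict_add, Measure.restrict_restrict hSm, Set.inter_compl_self,
      Measure.restrict_empty, zero_add]
    exact Measure.restrict_eq_self_of_ae_mem (by
      rw [Filter.eventually_iff, mem_ae_iff]
      simpa using hνSc)
  have hP'resSc : P'.restrict Sᶜ = P.restrict Sᶜ := by
    rw [hP'def, Measure.restrict_add, Measure.restrict_restrict hSm.compl, Set.inter_self,
      Measure.restrict_eq_zero.mpr hνSc, add_zero]
  -- notation for the training measures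
  set τ' : Measure (Fin n → Pt d) := Measure.pi fun _ : Fin n => P' with hτ'def
  set μT'' : Measure ((Fin n → Pt d) × Ω) := τ'.prod μΩ with hμT''def
  set μT : Measure ((Fin n → Pt d) × Ω) := (Measure.pi fun _ : Fin n => P).prod μΩ with hμTdef
  -- the test-point peeling equivalence
  set e : (Fin (n+1) → Pt d) ≃ᵐ (Pt d × (Fin n → Pt d)) :=
    MeasurableEquiv.piFinSuccAbove (fun _ : Fin (n+1) => Pt d) (Fin.last n) with hedef
  have he : MeasurePreserving e (Measure.pi fun _ : Fin (n+1) => P') (P'.prod τ') :=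
    measurePreserving_piFinSuccAbove (fun _ : Fin (n+1) => P') (Fin.last n)
  have hE1 : MeasurePreserving (Prod.map e id)
      ((Measure.pi fun _ : Fin (n+1) => P').prod μΩ) ((P'.prod τ').prod μΩ) :=
    he.prod (MeasurePreserving.id μΩ)
  have hassoc : MeasurePreserving (MeasurableEquiv.prodAssoc :
      (Pt d × (Fin n → Pt d)) × Ω ≃ᵐ Pt d × ((Fin n → Pt d) × Ω))
      ((P'.prod τ').prod μΩ) (P'.prod μT'') :=
    measurePreserving_prodAssoc P' τ' μΩ
  set E' : Set (Pt d × ((Fin n → Pt d) × Ω)) :=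
    {z | z.1.2 ∈ C z.2.1 z.2.2 z.1.1 ∧ z.1.1 ∈ 𝒳₀} with hE'def
  have hE'm : MeasurableSet E' := by
    have hset : E' = ((fun z : Pt d × ((Fin n → Pt d) × Ω) => ((z.2.1, z.2.2, z.1.1), z.1.2)) ⁻¹'
        {p : ((Fin n → Pt d) × Ω × (Fin d → ℝ)) × ℝ | p.2 ∈ C p.1.1 p.1.2.1 p.1.2.2}) ∩
        ((fun z : Pt d × ((Fin n → Pt d) × Ω) => z.1.1) ⁻¹' 𝒳₀) := rfl
    rw [hset]
    exact (hC.preimage (by fun_prop)).inter (h𝒳₀.preimage (by fun_prop))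
  have hremove : ∀ f : Fin (n+1) → Pt d,
      Fin.removeNth (Fin.last n) f = fun i => f i.castSucc := by
    intro f; funext i; simp [Fin.removeNth, Fin.succAbove_last]
  have hpre : covEvent C ∩ testEvent d n Ω 𝒳₀ =
      (⇑(MeasurableEquiv.prodAssoc :
        (Pt d × (Fin n → Pt d)) × Ω ≃ᵐ Pt d × ((Fin n → Pt d) × Ω)) ∘
        Prod.map (⇑e) id) ⁻¹' E' := by
    ext q
    obtain ⟨f, ω⟩ := q
    simp only [covEvent, testEvent, Set.mem_inter_iff, Set.mem_setOf_eq, Set.mem_preimage,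
      Function.comp_apply, Prod.map_apply, id_eq, hedef,
      MeasurableEquiv.piFinSuccAbove_apply, hE'def, Fin.insertNthEquiv_symm_apply,
      MeasurableEquiv.prodAssoc, Equiv.prodAssoc_apply]
    rw [hremove f]
    simp only [MeasurableEquiv.coe_mk, Equiv.prodAssoc_apply]
  have hEq1 : joint d n P' μΩ (covEvent C ∩ testEvent d n Ω 𝒳₀) = (P'.prod μT'') E' := by
    rw [show joint d n P' μΩ = (Measure.pi fun _ : Fin (n+1) => P').prod μΩ from rfl, hpre]
    exact (hassoc.comp hE1).measure_preimage hE'm.nullMeasurableSet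
  have hEq2 : (P'.prod μT'') E' = (ν.prod μT'') E' := by
    rw [Measure.prod_apply hE'm, Measure.prod_apply hE'm]
    have hind : ∀ p : Pt d, μT'' (Prod.mk p ⁻¹' E')
        = S.indicator (fun p => μT'' (Prod.mk p ⁻¹' E')) p := by
      intro p
      by_cases hp : p ∈ S
      · rw [Set.indicator_of_mem hp]
      · rw [Set.indicator_of_notMem hp]
        have hempty : Prod.mk p ⁻¹' E' = ∅ := by
          ext w
          simp only [Set.mem_preimage, Set.mem_empty_iff_false, iff_false, hE'def,
            Set.mem_setOf_eq, not_and]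
          intro _
          exact hp
        rw [hempty, measure_empty]
    rw [lintegral_congr hind, lintegral_indicator hSm, ← hP'resS]
  set E₅ : Set ((Fin d → ℝ) × (ℝ × ((Fin n → Pt d) × Ω))) :=
    {z | z.2.1 ∈ C z.2.2.1 z.2.2.2 z.1 ∧ z.1 ∈ 𝒳₀} with hE₅def
  have hE₅m : MeasurableSet E₅ := by
    have hset : E₅ = ((fun z : (Fin d → ℝ) × (ℝ × ((Fin n → Pt d) × Ω)) =>
        ((z.2.2.1, z.2.2.2, z.1), z.2.1)) ⁻¹'
        {p : ((Fin n → Pt d) × Ω × (Fin d → ℝ)) × ℝ | p.2 ∈ C p.1.1 p.1.2.1 p.1.2.2}) ∩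
        ((fun z : (Fin d → ℝ) × (ℝ × ((Fin n → Pt d) × Ω)) => z.1) ⁻¹' 𝒳₀) := rfl
    rw [hset]
    exact (hC.preimage (by fun_prop)).inter (h𝒳₀.preimage (by fun_prop))
  have hassoc2 : MeasurePreserving (MeasurableEquiv.prodAssoc :
      ((Fin d → ℝ) × ℝ) × ((Fin n → Pt d) × Ω) ≃ᵐ (Fin d → ℝ) × (ℝ × ((Fin n → Pt d) × Ω)))
      (((μX.restrict 𝒳₀).prod U).prod μT'') ((μX.restrict 𝒳₀).prod (U.prod μT'')) :=
    measurePreserving_prodAssoc (μX.restrict 𝒳₀) U μT''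
  have hE'5 : E' = (MeasurableEquiv.prodAssoc :
      ((Fin d → ℝ) × ℝ) × ((Fin n → Pt d) × Ω) ≃ᵐ (Fin d → ℝ) × (ℝ × ((Fin n → Pt d) × Ω)))
      ⁻¹' E₅ := by
    ext z
    simp only [hE'def, hE₅def, Set.mem_preimage, Set.mem_setOf_eq,
      MeasurableEquiv.prodAssoc, MeasurableEquiv.coe_mk, Equiv.prodAssoc_apply]
  have hEq3 : (ν.prod μT'') E' = ∫⁻ x in 𝒳₀, (U.prod μT'') (Prod.mk x ⁻¹' E₅) ∂μX := by
    rw [hE'5]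
    rw [show ν.prod μT'' = ((μX.restrict 𝒳₀).prod U).prod μT'' from rfl,
      hassoc2.measure_preimage hE₅m.nullMeasurableSet, Measure.prod_apply hE₅m]
  -- pointwise bound on the slice measure, for x in 𝒳₀
  have hslice_bound : ∀ x ∈ 𝒳₀, (U.prod μT'') (Prod.mk x ⁻¹' E₅) ≤
      (ENNReal.ofReal M)⁻¹ * B + n * μX 𝒳₀ := by
    intro x hx
    have hslice : Prod.mk x ⁻¹' E₅ = {z : ℝ × ((Fin n → Pt d) × Ω) | z.1 ∈ C z.2.1 z.2.2 x} := by
      ext z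
      simp only [Set.mem_preimage, hE₅def, Set.mem_setOf_eq, hx, and_true]
    have hExm : MeasurableSet {z : ℝ × ((Fin n → Pt d) × Ω) | z.1 ∈ C z.2.1 z.2.2 x} := by
      have hset : {z : ℝ × ((Fin n → Pt d) × Ω) | z.1 ∈ C z.2.1 z.2.2 x} =
          (fun z : ℝ × ((Fin n → Pt d) × Ω) => ((z.2.1, z.2.2, x), z.1)) ⁻¹'
          {p : ((Fin n → Pt d) × Ω × (Fin d → ℝ)) × ℝ | p.2 ∈ C p.1.1 p.1.2.1 p.1.2.2} := rfl
      rw [hset]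
      exact hC.preimage (by fun_prop)
    rw [hslice, Measure.prod_apply_symm hExm]
    have hinteg : (fun w : (Fin n → Pt d) × Ω =>
        U ((fun y => (y, w)) ⁻¹' {z : ℝ × ((Fin n → Pt d) × Ω) | z.1 ∈ C z.2.1 z.2.2 x}))
        = fun w => U (C w.1 w.2 x) := rfl
    rw [hinteg]
    -- split the training measure
    set W₀ : Set (Fin n → Pt d) := Set.pi Set.univ fun _ => Sᶜ with hW₀def
    have hW₀m : MeasurableSet W₀ := MeasurableSet.univ_pi fun _ => hSm.compl
    set R : Set ((Fin n → Pt d) × Ω) := W₀ ×ˢ (Set.univ : Set Ω) with hRdef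
    have hRm : MeasurableSet R := hW₀m.prod MeasurableSet.univ
    haveI : IsProbabilityMeasure τ' := by
      constructor
      rw [hτ'def, ← Set.pi_univ Set.univ, Measure.pi_pi]
      simp [hP'univ]
    haveI : IsProbabilityMeasure μT'' := by
      rw [hμT''def]; infer_instance
    have hμT''R : μT'' Rᶜ ≤ n * μX 𝒳₀ := by
      have h1 : μT'' R = (1 - μX 𝒳₀)^n := by
        rw [hμT''def, hRdef, Measure.prod_prod, measure_univ, mul_one, hτ'def, hW₀def,
          Measure.pi_pi, Finset.prod_const, Finset.card_univ, Fintype.card_fin, hP'Sc]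
      rw [measure_compl hRm (measure_ne_top _ _), measure_univ, h1]
      exact aux_bernoulli (μX 𝒳₀) prob_le_one n
    have hUle : ∀ w : (Fin n → Pt d) × Ω,
        U (C w.1 w.2 x) ≤ (ENNReal.ofReal M)⁻¹ * volume (C w.1 w.2 x) := by
      intro w
      rw [hUdef, Measure.smul_apply, smul_eq_mul, Measure.restrict_apply' measurableSet_Ioc]
      exact mul_le_mul_right (measure_mono Set.inter_subset_left) _
    have hres : μT''.restrict R = μT.restrict R := by
      have hrr : τ'.restrict W₀ = (Measure.pi fun _ : Fin n => P).restrict W₀ := by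
        rw [hτ'def, hW₀def, aux_pi_restrict n P' hSm.compl, aux_pi_restrict n P hSm.compl,
          hP'resSc]
      haveI : SigmaFinite (Measure.pi fun _ : Fin n => P) := Measure.pi.sigmaFinite _
      rw [hμT''def, hμTdef, hRdef, ← Measure.restrict_prod_eq_prod_univ,
        ← Measure.restrict_prod_eq_prod_univ, hrr]
    calc ∫⁻ w, U (C w.1 w.2 x) ∂μT''
        = (∫⁻ w in R, U (C w.1 w.2 x) ∂μT'') + ∫⁻ w in Rᶜ, U (C w.1 w.2 x) ∂μT'' :=
          (lintegral_add_compl _ hRm).symm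
      _ ≤ (∫⁻ w, U (C w.1 w.2 x) ∂μT) + n * μX 𝒳₀ := by
          refine add_le_add ?_ ?_
          · rw [show ∫⁻ w in R, U (C w.1 w.2 x) ∂μT'' = ∫⁻ w in R, U (C w.1 w.2 x) ∂μT from by
              rw [hres]]
            exact lintegral_mono' Measure.restrict_le_self le_rfl
          · calc ∫⁻ w in Rᶜ, U (C w.1 w.2 x) ∂μT'' ≤ ∫⁻ _ in Rᶜ, 1 ∂μT'' :=
                  lintegral_mono fun w => prob_le_one
              _ = μT'' Rᶜ := setLIntegral_one _
              _ ≤ n * μX 𝒳₀ := hμT''R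
      _ ≤ (ENNReal.ofReal M)⁻¹ * B + n * μX 𝒳₀ := by
          refine add_le_add_left ?_ _
          calc ∫⁻ w, U (C w.1 w.2 x) ∂μT
              ≤ ∫⁻ w, (ENNReal.ofReal M)⁻¹ * volume (C w.1 w.2 x) ∂μT := lintegral_mono hUle
            _ = (ENNReal.ofReal M)⁻¹ * ∫⁻ w, volume (C w.1 w.2 x) ∂μT :=
                lintegral_const_mul' _ _ (ENNReal.inv_ne_top.mpr hMne)
            _ ≤ (ENNReal.ofReal M)⁻¹ * B := mul_le_mul_right (hgB x hx) _
  -- the test event has probability μX 𝒳₀ under P'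
  have htest : joint d n P' μΩ (testEvent d n Ω 𝒳₀) = μX 𝒳₀ := by
    have h1 : testEvent d n Ω 𝒳₀ =
        {f : Fin (n+1) → Pt d | f (Fin.last n) ∈ S} ×ˢ (Set.univ : Set Ω) := by
      ext q
      simp [testEvent, hSdef, Set.mem_prod]
    have h2 : {f : Fin (n+1) → Pt d | f (Fin.last n) ∈ S}
        = Set.pi Set.univ (fun i => if i = Fin.last n then S else Set.univ) := by
      ext f
      simp only [Set.mem_setOf_eq, Set.mem_pi, Set.mem_univ, forall_true_left]
      constructor
      · intro h i
        split_ifs with hi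
        · rwa [hi]
        · trivial
      · intro h
        simpa using h (Fin.last n)
    rw [show joint d n P' μΩ = (Measure.pi fun _ : Fin (n+1) => P').prod μΩ from rfl, h1,
      Measure.prod_prod, measure_univ, mul_one, h2, Measure.pi_pi]
    rw [Finset.prod_congr rfl fun i _ => show P' (if i = Fin.last n then S else Set.univ)
      = if i = Fin.last n then μX 𝒳₀ else 1 by split_ifs; exacts [hP'S, measure_univ]]
    rw [Finset.prod_ite_eq' Finset.univ (Fin.last n) (fun _ => μX 𝒳₀)]
    simp
  -- put everything together
  have hCCappl := hCC P' hP'prob 𝒳₀ h𝒳₀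
  rw [htest] at hCCappl
  refine hCCappl.trans ?_
  rw [hEq1, hEq2, hEq3]
  calc ∫⁻ x in 𝒳₀, (U.prod μT'') (Prod.mk x ⁻¹' E₅) ∂μX
      ≤ ∫⁻ _ in 𝒳₀, ((ENNReal.ofReal M)⁻¹ * B + n * μX 𝒳₀) ∂μX := by
        refine lintegral_mono_ae ?_
        filter_upwards [ae_restrict_mem h𝒳₀] with x hx
        exact hslice_bound x hx
    _ = ((ENNReal.ofReal M)⁻¹ * B + n * μX 𝒳₀) * μX 𝒳₀ := by
        rw [setLIntegral_const]

lemma aux_small_subset {X : Type*} [MeasurableSpace X] [MetricSpace X]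
    [TopologicalSpace.SeparableSpace X] [OpensMeasurableSpace X]
    (μ : Measure X) [IsFiniteMeasure μ]
    {A : Set X} (hA : MeasurableSet A) (hatom : ∀ x ∈ A, μ {x} = 0)
    (hpos : μ A ≠ 0) {ε : ℝ≥0∞} (hε : 0 < ε) :
    ∃ s, MeasurableSet s ∧ s ⊆ A ∧ 0 < μ s ∧ μ s < ε := by
  set ν := μ.restrict A with hν
  haveI : NoAtoms ν := by
    refine ⟨fun x => ?_⟩
    rw [hν, Measure.restrict_apply (measurableSet_singleton x)]
    by_cases hx : x ∈ A
    · rw [Set.inter_eq_self_of_subset_left (Set.singleton_subset_iff.2 hx)]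
      exact hatom x hx
    · rw [Set.singleton_inter_eq_empty.mpr hx, measure_empty]
  have step : ∀ s : Set X, MeasurableSet s → ν s ≠ 0 → ∀ m : ℕ,
      ∃ t, MeasurableSet t ∧ t ⊆ s ∧ ν t ≠ 0 ∧ ∃ c, t ⊆ Metric.ball c ((1/2)^m) := by
    intro s hs hνs m
    have hr : (0:ℝ) < (1/2)^m := by positivity
    obtain ⟨D, hDc, hDd⟩ := TopologicalSpace.exists_countable_dense X
    by_contra hcon
    push_neg at hcon
    have hall : ∀ c ∈ D, ν (s ∩ Metric.ball c ((1/2)^m)) = 0 := by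
      intro c _
      by_contra h0
      exact (hcon (s ∩ Metric.ball c ((1/2)^m)) (hs.inter Metric.isOpen_ball.measurableSet)
        Set.inter_subset_left h0 c) Set.inter_subset_right
    have hcover : s ⊆ ⋃ c ∈ D, s ∩ Metric.ball c ((1/2)^m) := by
      intro x hx
      obtain ⟨c, hcD, hc⟩ := hDd.exists_dist_lt x hr
      exact Set.mem_biUnion hcD ⟨hx, by simpa [Metric.mem_ball] using hc⟩
    exact hνs (measure_mono_null hcover ((measure_biUnion_null_iff hDc).mpr hall))
  choose t ht1 ht2 ht3 c ht4 using step
  have hνA : ν A ≠ 0 := by rwa [hν, Measure.restrict_apply hA, Set.inter_self]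
  let F : ℕ → {s : Set X // MeasurableSet s ∧ ν s ≠ 0} := fun m =>
    Nat.rec ⟨A, hA, hνA⟩ (fun m p => ⟨t p.1 p.2.1 p.2.2 m, ht1 _ _ _ _, ht3 _ _ _ _⟩) m
  have hFsucc : ∀ m, (F (m+1)).1 ⊆ (F m).1 := fun m => ht2 _ _ _ _
  have hanti : Antitone fun m => (F m).1 := antitone_nat_of_succ_le hFsucc
  have hsubA : ∀ m, (F m).1 ⊆ A := by
    intro m
    induction m with
    | zero => exact subset_rfl
    | succ m ih => exact (hFsucc m).trans ih
  have hball : ∀ m, (F (m+1)).1 ⊆ Metric.ball (c (F m).1 (F m).2.1 (F m).2.2 m) ((1/2)^m) :=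
    fun m => ht4 _ _ _ _
  have hsub : Set.Subsingleton (⋂ m, (F m).1) := by
    intro a ha b hb
    have hd : ∀ m : ℕ, dist a b ≤ 2 * (1/2:ℝ)^m := by
      intro m
      have ha' : a ∈ (F (m+1)).1 := Set.mem_iInter.mp ha (m+1)
      have hb' : b ∈ (F (m+1)).1 := Set.mem_iInter.mp hb (m+1)
      have h1 := hball m ha'
      have h2 := hball m hb'
      rw [Metric.mem_ball] at h1 h2
      have := dist_triangle a (c (F m).1 (F m).2.1 (F m).2.2 m) b
      have h2' : dist (c (F m).1 (F m).2.1 (F m).2.2 m) b = dist b _ := dist_comm _ _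
      nlinarith [dist_comm b (c (F m).1 (F m).2.1 (F m).2.2 m)]
    have htend : Filter.Tendsto (fun m : ℕ => 2 * (1/2:ℝ)^m) Filter.atTop (nhds 0) := by
      have := tendsto_pow_atTop_nhds_zero_of_lt_one (by norm_num : (0:ℝ) ≤ 1/2) (by norm_num)
      simpa using this.const_mul 2
    have : dist a b ≤ 0 := ge_of_tendsto htend (Filter.Eventually.of_forall hd)
    exact dist_le_zero.mp this
  have hν0 : ν (⋂ m, (F m).1) = 0 := @Set.Subsingleton.measure_zero _ _ _ hsub ν ‹NoAtoms ν›
  have htend2 : Filter.Tendsto (fun m => ν (F m).1) Filter.atTop (nhds 0) := by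
    have := tendsto_measure_iInter_atTop (μ := ν) (s := fun m => (F m).1)
      (fun m => ((F m).2.1).nullMeasurableSet) hanti ⟨0, measure_ne_top ν _⟩
    rwa [hν0] at this
  obtain ⟨m, hm⟩ := (htend2.eventually_lt_const hε).exists
  have hkey : ν (F m).1 = μ (F m).1 := by
    have h := Measure.restrict_apply (μ := μ) (s := A) (F m).2.1
    rw [Set.inter_eq_self_of_subset_left (hsubA m)] at h
    exact h
  refine ⟨(F m).1, (F m).2.1, hsubA m, ?_, ?_⟩
  · rw [← hkey]
    exact pos_iff_ne_zero.mpr (F m).2.2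
  · rwa [← hkey]

/-- **Impossibility of distribution-free conditional coverage (Vovk; Lei–Wasserman):**
if `Ĉ_n` satisfies `(1-α)`-CC with `α < 1`, then for every distribution `P`, at `P_X`-almost
every point `x` that is not an atom of `P_X`, the expected Lebesgue measure of `Ĉ_n(x)`
(over the training data and auxiliary randomness) is infinite. -/
theorem cc_implies_infinite_length (d n : ℕ) (Ω : Type) [MeasurableSpace Ω]
    (μΩ : Measure Ω) [IsProbabilityMeasure μΩ] (α : ℝ) (hα : α < 1)
    (C : PredAlg d n Ω)
    (hC : MeasurableSet {p : ((Fin n → Pt d) × Ω × (Fin d → ℝ)) × ℝ |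
      p.2 ∈ C p.1.1 p.1.2.1 p.1.2.2})
    (hCC : CC d n μΩ C α)
    (P : Measure (Pt d)) [IsProbabilityMeasure P] :
    ∀ᵐ x ∂(P.map Prod.fst), P.map Prod.fst {x} = 0 →
      ∫⁻ q, volume (C q.1 q.2 x) ∂((Measure.pi fun _ : Fin n => P).prod μΩ) = ⊤ := by
  
  classical
  have hfst : Measurable (Prod.fst : Pt d → (Fin d → ℝ)) := measurable_fst
  set μX : Measure (Fin d → ℝ) := P.map Prod.fst with hμX
  haveI : IsProbabilityMeasure μX := Measure.isProbabilityMeasure_map hfst.aemeasurable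
  set μT : Measure ((Fin n → Pt d) × Ω) := (Measure.pi fun _ : Fin n => P).prod μΩ with hμT
  set g : (Fin d → ℝ) → ℝ≥0∞ := fun x => ∫⁻ q, volume (C q.1 q.2 x) ∂μT with hg
  show ∀ᵐ x ∂μX, μX {x} = 0 → g x = ⊤
  -- measurability of g
  have hCset2 : MeasurableSet {z : ((Fin d → ℝ) × ((Fin n → Pt d) × Ω)) × ℝ |
      z.2 ∈ C z.1.2.1 z.1.2.2 z.1.1} := by
    have hset : {z : ((Fin d → ℝ) × ((Fin n → Pt d) × Ω)) × ℝ | z.2 ∈ C z.1.2.1 z.1.2.2 z.1.1}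
        = (fun z : ((Fin d → ℝ) × ((Fin n → Pt d) × Ω)) × ℝ =>
          ((z.1.2.1, z.1.2.2, z.1.1), z.2)) ⁻¹'
          {p : ((Fin n → Pt d) × Ω × (Fin d → ℝ)) × ℝ | p.2 ∈ C p.1.1 p.1.2.1 p.1.2.2} := rfl
    rw [hset]
    exact hC.preimage (by fun_prop)
  have hgm : Measurable g := by
    rw [hg]
    exact Measurable.lintegral_prod_right
      (f := fun x (q : (Fin n → Pt d) × Ω) => volume (C q.1 q.2 x))
      (measurable_measure_prodMk_left hCset2)
  -- the set of atoms is countable, hence the set of non-atoms is measurable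
  have hctble : Set.Countable {x : Fin d → ℝ | μX {x} ≠ 0} := by
    have h := Measure.countable_meas_pos_of_disjoint_iUnion (μ := μX)
      (As := fun x : Fin d → ℝ => {x}) (fun x => measurableSet_singleton x)
      (fun i j hij => by simp [Function.onFun, hij])
    have hsets : {x : Fin d → ℝ | μX {x} ≠ 0} = {x : Fin d → ℝ | 0 < μX {x}} := by
      ext x; simp [pos_iff_ne_zero]
    rw [hsets]
    exact h
  have hAtomMeas : MeasurableSet {x : Fin d → ℝ | μX {x} = 0} := by
    have hsets : {x : Fin d → ℝ | μX {x} = 0} = {x : Fin d → ℝ | μX {x} ≠ 0}ᶜ := by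
      ext x; simp
    rw [hsets]
    exact hctble.measurableSet.compl
  -- the key step: each bounded-expected-length set of non-atoms is null
  have key : ∀ B : ℕ, μX {x | μX {x} = 0 ∧ g x ≤ B} = 0 := by
    intro B
    by_contra hne
    set A : Set (Fin d → ℝ) := {x | μX {x} = 0 ∧ g x ≤ B} with hA
    have hAm : MeasurableSet A := by
      have hsets : A = {x : Fin d → ℝ | μX {x} = 0} ∩ {x : Fin d → ℝ | g x ≤ B} := rfl
      rw [hsets]
      exact hAtomMeas.inter (measurableSet_le hgm measurable_const)
    set β : ℝ≥0∞ := ENNReal.ofReal (1 - α) with hβ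
    have hβ0 : β ≠ 0 := (ENNReal.ofReal_pos.mpr (by linarith)).ne'
    have hβt : β ≠ ⊤ := ENNReal.ofReal_ne_top
    have hc0 : ((n : ℝ≥0∞) + 1) ≠ 0 := by simp
    have hct : ((n : ℝ≥0∞) + 1) ≠ ⊤ := by simp
    have hε : (0:ℝ≥0∞) < β / (2 * ((n : ℝ≥0∞) + 1)) :=
      ENNReal.div_pos hβ0 (ENNReal.mul_ne_top (by simp) hct)
    obtain ⟨𝒳₀, h𝒳₀m, hsub, hpos, hlt⟩ :=
      aux_small_subset μX hAm (fun x hx => hx.1) hne hε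
    have hβ4 : β/4 ≠ 0 := (ENNReal.div_pos hβ0 (by simp)).ne'
    set t : ℝ≥0∞ := (B : ℝ≥0∞) / (β/4) with ht
    have htne : t ≠ ⊤ := (ENNReal.div_lt_top (by simp) hβ4).ne
    set M : ℝ := t.toReal + 1 with hM
    have hM0 : 0 < M := by positivity
    have hkey := aux_key d n Ω μΩ α C hC hCC P 𝒳₀ h𝒳₀m B (fun x hx => (hsub hx).2) M hM0
    have hη0 : μX 𝒳₀ ≠ 0 := hpos.ne'
    have hηt : μX 𝒳₀ ≠ ⊤ := measure_ne_top _ _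
    have h1 : β ≤ (ENNReal.ofReal M)⁻¹ * B + n * μX 𝒳₀ :=
      (ENNReal.mul_le_mul_iff_left hη0 hηt).mp hkey
    have h2 : (n : ℝ≥0∞) * μX 𝒳₀ ≤ β/2 := by
      have h4 : ((n : ℝ≥0∞) + 1) * (β / (2 * ((n : ℝ≥0∞) + 1))) = β/2 := by
        rw [div_eq_mul_inv, ENNReal.mul_inv (Or.inl (by simp)) (Or.inl (by simp))]
        calc ((n : ℝ≥0∞) + 1) * (β * (2⁻¹ * ((n : ℝ≥0∞) + 1)⁻¹))
            = (((n : ℝ≥0∞) + 1) * ((n : ℝ≥0∞) + 1)⁻¹) * (β * 2⁻¹) := by ring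
          _ = β * 2⁻¹ := by rw [ENNReal.mul_inv_cancel hc0 hct, one_mul]
          _ = β / 2 := (div_eq_mul_inv β 2).symm
      calc (n : ℝ≥0∞) * μX 𝒳₀
          ≤ ((n : ℝ≥0∞) + 1) * (β / (2 * ((n : ℝ≥0∞) + 1))) :=
            mul_le_mul' le_self_add hlt.le
        _ = β/2 := h4
    have h3 : (ENNReal.ofReal M)⁻¹ * B ≤ β/4 := by
      have hofM : t ≤ ENNReal.ofReal M := by
        calc t = ENNReal.ofReal t.toReal := (ENNReal.ofReal_toReal htne).symm
          _ ≤ ENNReal.ofReal M := ENNReal.ofReal_le_ofReal (by rw [hM]; linarith)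
      have hinv : (ENNReal.ofReal M)⁻¹ ≤ t⁻¹ := ENNReal.inv_le_inv' hofM
      have htinv : t⁻¹ = (β/4) / B := by
        rw [ht]
        exact ENNReal.inv_div (Or.inr (by simp)) (Or.inl hβ4)
      calc (ENNReal.ofReal M)⁻¹ * B ≤ t⁻¹ * B := mul_le_mul_left hinv _
        _ = B * ((β/4) / B) := by rw [htinv, mul_comm]
        _ ≤ β/4 := ENNReal.mul_div_le
    have hfinal : β ≤ β/4 + β/2 := h1.trans (add_le_add h3 h2)
    have hlt2 : β/4 + β/2 < β := by
      have hsumne : β/4 + β/2 ≠ ⊤ :=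
        ENNReal.add_ne_top.mpr ⟨(ENNReal.div_lt_top hβt (by simp)).ne,
          (ENNReal.div_lt_top hβt (by simp)).ne⟩
      have hβpos : 0 < β.toReal := ENNReal.toReal_pos hβ0 hβt
      refine (ENNReal.toReal_lt_toReal hsumne hβt).mp ?_
      rw [ENNReal.toReal_add (ENNReal.div_lt_top hβt (by simp)).ne
        (ENNReal.div_lt_top hβt (by simp)).ne]
      simp only [ENNReal.toReal_div, ENNReal.toReal_ofNat]
      linarith
    exact lt_irrefl β (lt_of_le_of_lt hfinal hlt2)
  -- conclude
  rw [ae_iff]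
  have hsubset : {x | ¬(μX {x} = 0 → g x = ⊤)} ⊆ ⋃ B : ℕ, {x | μX {x} = 0 ∧ g x ≤ B} := by
    intro x hx
    rw [Set.mem_setOf_eq, Classical.not_imp] at hx
    obtain ⟨h1, h2⟩ := hx
    obtain ⟨B, hB⟩ := ENNReal.exists_nat_gt h2
    exact Set.mem_iUnion.mpr ⟨B, h1, hB.le⟩
  exact measure_mono_null hsubset (measure_iUnion_null fun B => key B)
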